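/- Let n ≥ 3 be an integer, let S = {s(n−1)+1 : s ∈ ℤ, 1 ≤ s ≤ n} ⊆ ℕ, and let ⟨S⟩ be the additive submonoid of ℕ generated by S. Then the complement ℕ \ ⟨S⟩ is finite and has exactly n(n−1)/2 elements. -/

import Mathlib

private lemma aux_closure (d m : ℕ) :
    m ∈ AddSubmonoid.closure {m : ℕ | ∃ s : ℕ, 1 ≤ s ∧ s ≤ d + 1 ∧ m = s * d + 1} ↔
    ∃ k t : ℕ, k ≤ t ∧ t ≤ k * (d + 1) ∧ m = t * d + k := by
  constructor
  · intro h
    induction h using AddSubmonoid.closure_induction with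
    | mem x hx => obtain ⟨s, hs1, hs2, rfl⟩ := hx; exact ⟨1, s, hs1, by simpa, by ring⟩
    | zero => exact ⟨0, 0, le_rfl, by simp, by simp⟩
    | add a b _ _ iha ihb =>
        obtain ⟨k1, t1, h1, h2, rfl⟩ := iha
        obtain ⟨k2, t2, h3, h4, rfl⟩ := ihb
        exact ⟨k1 + k2, t1 + t2, by omega, by rw [add_mul]; omega, by ring⟩
  · rintro ⟨k, t, hkt, htk, rfl⟩
    induction k generalizing t with
    | zero =>
        have : t = 0 := by omega
        subst this; simpa using AddSubmonoid.zero_mem _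
    | succ k ih =>
        have haux1 : (k + 1) * (d + 1) = k * (d + 1) + d + 1 := by ring
        have haux2 : k * (d + 1) = k * d + k := by ring
        set s := min (t - k) (d + 1) with hs
        set t' := t - s with ht'
        have hts : t = s + t' := by omega
        have h1 : k ≤ t' := by omega
        have h2 : t' ≤ k * (d + 1) := by omega
        have h3 : 1 ≤ s ∧ s ≤ d + 1 := by omega
        have hmem : s * d + 1 ∈ ({m : ℕ | ∃ s : ℕ, 1 ≤ s ∧ s ≤ d + 1 ∧ m = s * d + 1}) :=
          ⟨s, h3.1, h3.2, rfl⟩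
        have hadd := AddSubmonoid.add_mem _ (AddSubmonoid.subset_closure hmem) (ih t' h1 h2)
        have heq : t * d + (k + 1) = (s * d + 1) + (t' * d + k) := by rw [hts]; ring
        rwa [heq]

private lemma aux_total (d : ℕ) (hd : 2 ≤ d) (m : ℕ) :
    (∃ k t : ℕ, k ≤ t ∧ t ≤ k * (d + 1) ∧ m = t * d + k) ∨
    (∃ j k0 : ℕ, j < k0 ∧ k0 ≤ d ∧ m = j * d + k0) := by
  rcases Nat.eq_zero_or_pos m with rfl | hm
  · exact Or.inl ⟨0, 0, le_rfl, by simp, by simp⟩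
  obtain ⟨q, r, hrd, hmqr⟩ : ∃ q r, r < d ∧ m = q * d + r + 1 := by
    refine ⟨(m - 1) / d, (m - 1) % d, Nat.mod_lt _ (by omega), ?_⟩
    have h1 := Nat.div_add_mod (m - 1) d
    have h2 : (m - 1) / d * d = d * ((m - 1) / d) := Nat.mul_comm _ _
    omega
  by_cases hqk : q < r + 1
  · exact Or.inr ⟨q, r + 1, hqk, by omega, by omega⟩
  push_neg at hqk
  left
  set A := (r + 1) * (d + 1) with hA
  have hA' : A = r * d + r + d + 1 := by rw [hA]; ring
  by_cases hqA : q ≤ A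
  · exact ⟨r + 1, q, hqk, hqA, by rw [hmqr]; ring⟩
  push_neg at hqA
  obtain ⟨Q, hQ⟩ : ∃ Q, q = A + 1 + Q := ⟨q - A - 1, by omega⟩
  set M := d * (d + 1) + 1 with hM
  have hM0 : 0 < M := by positivity
  obtain ⟨l, hlM1, hlM2⟩ : ∃ l, Q + 1 ≤ l * M ∧ l * M ≤ Q + M := by
    refine ⟨Q / M + 1, ?_, ?_⟩
    · have h1 := Nat.div_add_mod Q M
      have h2 : Q % M < M := Nat.mod_lt _ hM0
      have h3 : (Q / M + 1) * M = M * (Q / M) + M := by ring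
      omega
    · have h1 := Nat.div_mul_le_self Q M
      have h3 : (Q / M + 1) * M = Q / M * M + M := by ring
      omega
  have hkey : (Q + M) * (d + 1) ≤ (r * d + d + 1 + Q) * M := by
    rw [hM]; nlinarith [Nat.zero_le (Q * d * d), Nat.zero_le (r * d)]
  have hld : l * (d + 1) ≤ r * d + d + 1 + Q := by
    have h2 : l * (d + 1) * M ≤ (r * d + d + 1 + Q) * M := by
      calc l * (d + 1) * M = l * M * (d + 1) := by ring
        _ ≤ (Q + M) * (d + 1) := Nat.mul_le_mul_right _ hlM2
        _ ≤ (r * d + d + 1 + Q) * M := hkey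
    exact Nat.le_of_mul_le_mul_right h2 hM0
  have hld' : l * (d + 1) = l * d + l := by ring
  have hlq : l ≤ q := by omega
  refine ⟨r + 1 + l * d, q - l, by omega, ?_, ?_⟩
  · have hexp : (r + 1 + l * d) * (d + 1) = A + l * (d * (d + 1)) := by rw [hA]; ring
    have h5 : l * M = l * (d * (d + 1)) + l := by rw [hM]; ring
    omega
  · have h6 : (l + (q - l)) * d = l * d + (q - l) * d := by ring
    have h7 : l + (q - l) = q := by omega
    rw [h7] at h6
    omega

private lemma aux_not_both (d : ℕ) (hd : 2 ≤ d) (m : ℕ)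
    (h1 : ∃ k t : ℕ, k ≤ t ∧ t ≤ k * (d + 1) ∧ m = t * d + k)
    (h2 : ∃ j k0 : ℕ, j < k0 ∧ k0 ≤ d ∧ m = j * d + k0) : False := by
  obtain ⟨k, t, hkt, htk, hm1⟩ := h1
  obtain ⟨j, k0, hjk, hk0, hm2⟩ := h2
  rcases Nat.eq_zero_or_pos k with rfl | hk
  · have ht : t = 0 := by omega
    subst ht; simp at hm1; omega
  have heq : t * d + k = j * d + k0 := by omega
  rcases le_or_gt t j with htj | hjt
  · obtain ⟨e, he⟩ : ∃ e, j = t + e := ⟨j - t, by omega⟩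
    have hy : j * d = t * d + e * d := by rw [he]; ring
    rcases Nat.eq_zero_or_pos e with he0 | he1
    · have hjt' : j = t := by omega
      subst hjt'
      omega
    · have : d ≤ e * d := Nat.le_mul_of_pos_left _ he1
      omega
  · obtain ⟨e, he⟩ : ∃ e, t = j + e := ⟨t - j, by omega⟩
    have he1 : 1 ≤ e := by omega
    have hy : t * d = j * d + e * d := by rw [he]; ring
    have : d ≤ e * d := Nat.le_mul_of_pos_left _ he1
    omega

/-- For `n ≥ 3` and `S = {s(n-1)+1 : 1 ≤ s ≤ n}`, the complement in `ℕ` of the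
additive submonoid generated by `S` is finite, with exactly `n(n-1)/2` elements. -/
theorem stmt_2 (n : ℕ) (hn : 3 ≤ n) :
    ((AddSubmonoid.closure
        {m : ℕ | ∃ s : ℤ, 1 ≤ s ∧ s ≤ (n : ℤ) ∧ (m : ℤ) = s * ((n : ℤ) - 1) + 1} :
      Set ℕ)ᶜ).Finite ∧
    ((AddSubmonoid.closure
        {m : ℕ | ∃ s : ℤ, 1 ≤ s ∧ s ≤ (n : ℤ) ∧ (m : ℤ) = s * ((n : ℤ) - 1) + 1} :
      Set ℕ)ᶜ).ncard = n * (n - 1) / 2 := by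
  obtain ⟨d, hd, rfl⟩ : ∃ d, 2 ≤ d ∧ n = d + 1 := ⟨n - 1, by omega, by omega⟩
  have hSet : {m : ℕ | ∃ s : ℤ, 1 ≤ s ∧ s ≤ ((d + 1 : ℕ) : ℤ) ∧
      (m : ℤ) = s * (((d + 1 : ℕ) : ℤ) - 1) + 1} =
      {m : ℕ | ∃ s : ℕ, 1 ≤ s ∧ s ≤ d + 1 ∧ m = s * d + 1} := by
    ext m
    simp only [Set.mem_setOf_eq]
    constructor
    · rintro ⟨s, h1, h2, h3⟩
      push_cast at h2 h3
      have hs : ((s.toNat : ℕ) : ℤ) = s := Int.toNat_of_nonneg (by omega)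
      refine ⟨s.toNat, by omega, by omega, ?_⟩
      have : (m : ℤ) = ((s.toNat * d + 1 : ℕ) : ℤ) := by push_cast; rw [hs]; linarith
      exact_mod_cast this
    · rintro ⟨s, h1, h2, rfl⟩
      exact ⟨(s : ℤ), by exact_mod_cast h1, by exact_mod_cast h2, by push_cast; ring⟩
  rw [hSet]
  set F : Finset ℕ := Finset.image (fun p : (_ : ℕ) × ℕ => p.2 * d + p.1 + 1)
    ((Finset.range d).sigma fun k => Finset.range (k + 1)) with hF
  have hcompl : ((AddSubmonoid.closure
      {m : ℕ | ∃ s : ℕ, 1 ≤ s ∧ s ≤ d + 1 ∧ m = s * d + 1} : Set ℕ))ᶜ = ↑F := by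
    ext m
    simp only [Set.mem_compl_iff, SetLike.mem_coe, Finset.coe_image, Set.mem_image,
      Finset.mem_coe, Finset.mem_sigma, Finset.mem_range, hF, Finset.mem_image]
    rw [aux_closure]
    constructor
    · intro hnot
      rcases aux_total d hd m with hyes | hgap
      · exact absurd hyes hnot
      · obtain ⟨j, k0, hj, hk0, rfl⟩ := hgap
        refine ⟨⟨k0 - 1, j⟩, ⟨?_, ?_⟩, ?_⟩ <;> dsimp only <;> omega
    · rintro ⟨⟨k, j⟩, ⟨hk, hj⟩, rfl⟩ hyes
      dsimp only at hk hj hyes ⊢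
      exact aux_not_both d hd _ hyes ⟨j, k + 1, by omega, by omega, by omega⟩
  rw [hcompl]
  refine ⟨Finset.finite_toSet _, ?_⟩
  rw [Set.ncard_coe_finset]
  have hinj : Set.InjOn (fun p : (_ : ℕ) × ℕ => p.2 * d + p.1 + 1)
      ((Finset.range d).sigma fun k => Finset.range (k + 1)) := by
    rintro ⟨k, j⟩ hp ⟨k', j'⟩ hp' hpq
    simp only [Finset.coe_sigma, Set.mem_sigma_iff, Finset.mem_coe, Finset.mem_range] at hp hp'
    dsimp only at hpq
    obtain ⟨hk, hj⟩ := hp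
    obtain ⟨hk', hj'⟩ := hp'
    rcases le_or_gt j j' with h | h
    · obtain ⟨e, rfl⟩ : ∃ e, j' = j + e := ⟨j' - j, by omega⟩
      have hy : (j + e) * d = j * d + e * d := by ring
      rcases Nat.eq_zero_or_pos e with he0 | he1
      · have hz : e * d = 0 := by rw [he0, Nat.zero_mul]
        subst he0
        obtain rfl : k = k' := by omega
        simp
      · have : d ≤ e * d := Nat.le_mul_of_pos_left _ he1
        exfalso; omega
    · obtain ⟨e, rfl⟩ : ∃ e, j = j' + e := ⟨j - j', by omega⟩
      have hy : (j' + e) * d = j' * d + e * d := by ring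
      have he1 : 1 ≤ e := by omega
      have : d ≤ e * d := Nat.le_mul_of_pos_left _ he1
      exfalso; omega
  rw [hF, Finset.card_image_of_injOn hinj, Finset.card_sigma]
  simp only [Finset.card_range]
  have hsum : ∑ k ∈ Finset.range d, (k + 1) = (d + 1) * d / 2 := by
    have h1 : (∑ i ∈ Finset.range (d + 1), i) * 2 = (d + 1) * d := by
      simpa using Finset.sum_range_id_mul_two (d + 1)
    have h2 : ∑ i ∈ Finset.range (d + 1), i = ∑ k ∈ Finset.range d, (k + 1) := by
      rw [Finset.sum_range_succ' (fun i => i) d]; simp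
    omega
  rw [hsum]
  simp
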